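/- The function g₁(x) = cosh(x) − (cosh x)⁻¹ − x·arctan(sinh x) is strictly increasing on [0, ∞). -/

import Mathlib

open Real

private lemma hd1 (x : ℝ) :
    HasDerivAt (fun x : ℝ => Real.cosh x - (Real.cosh x)⁻¹ - x * Real.arctan (Real.sinh x))
      (Real.sinh x + Real.sinh x / (Real.cosh x) ^ 2
        - (Real.arctan (Real.sinh x) + x / Real.cosh x)) x := by
  have hc : Real.cosh x ≠ 0 := (Real.cosh_pos _).ne'
  have h1 : HasDerivAt (fun x : ℝ => (Real.cosh x)⁻¹)
      (-(Real.sinh x) / (Real.cosh x) ^ 2) x := (Real.hasDerivAt_cosh x).inv hc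
  have h2 : HasDerivAt (fun x : ℝ => Real.arctan (Real.sinh x))
      (1 / (1 + Real.sinh x ^ 2) * Real.cosh x) x := (Real.hasDerivAt_sinh x).arctan
  have h3 : HasDerivAt (fun x : ℝ => x * Real.arctan (Real.sinh x))
      (1 * Real.arctan (Real.sinh x) + x * (1 / (1 + Real.sinh x ^ 2) * Real.cosh x)) x :=
    (hasDerivAt_id x).mul h2
  have := ((Real.hasDerivAt_cosh x).sub h1).sub h3
  refine this.congr_deriv (Eq.symm ?_)
  have hc2 : (Real.cosh x) ^ 2 ≠ 0 := pow_ne_zero _ hc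
  have hs : 1 + Real.sinh x ^ 2 = Real.cosh x ^ 2 := by
    rw [Real.cosh_sq']
  rw [hs]
  field_simp
  ring

private lemma hd2 (x : ℝ) :
    HasDerivAt (fun x : ℝ => Real.sinh x + Real.sinh x / (Real.cosh x) ^ 2
        - (Real.arctan (Real.sinh x) + x / Real.cosh x))
      (Real.sinh x / (Real.cosh x) ^ 3 * (Real.sinh x ^ 3 - Real.sinh x + x * Real.cosh x)) x := by
  have hc : Real.cosh x ≠ 0 := (Real.cosh_pos _).ne'
  have hc2 : ((Real.cosh x) ^ 2) ≠ 0 := pow_ne_zero _ hc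
  have h1 : HasDerivAt (fun x : ℝ => Real.sinh x / (Real.cosh x) ^ 2)
      ((Real.cosh x * Real.cosh x ^ 2 - Real.sinh x * (2 * Real.cosh x ^ 1 * Real.sinh x))
        / (Real.cosh x ^ 2) ^ 2) x :=
    (Real.hasDerivAt_sinh x).div ((Real.hasDerivAt_cosh x).pow 2) hc2
  have h2 : HasDerivAt (fun x : ℝ => Real.arctan (Real.sinh x))
      (1 / (1 + Real.sinh x ^ 2) * Real.cosh x) x := (Real.hasDerivAt_sinh x).arctan
  have h3 : HasDerivAt (fun x : ℝ => x / Real.cosh x)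
      ((1 * Real.cosh x - x * Real.sinh x) / (Real.cosh x) ^ 2) x :=
    (hasDerivAt_id x).div (Real.hasDerivAt_cosh x) hc
  have := ((Real.hasDerivAt_sinh x).add h1).sub (h2.add h3)
  refine this.congr_deriv (Eq.symm ?_)
  have hs : 1 + Real.sinh x ^ 2 = Real.cosh x ^ 2 := by rw [Real.cosh_sq']
  have hs2 : Real.cosh x ^ 2 = 1 + Real.sinh x ^ 2 := hs.symm
  rw [hs]
  field_simp
  ring_nf
  linear_combination (Real.sinh x ^ 2 + Real.cosh x ^ 2) * hs

private lemma sinh_le_mul_cosh {x : ℝ} (hx : 0 ≤ x) : Real.sinh x ≤ x * Real.cosh x := by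
  have h : MonotoneOn (fun x : ℝ => x * Real.cosh x - Real.sinh x) (Set.Ici (0:ℝ)) := by
    apply monotoneOn_of_deriv_nonneg (convex_Ici 0)
    · exact Continuous.continuousOn (by fun_prop)
    · intro y hy
      exact (((hasDerivAt_id y).mul (Real.hasDerivAt_cosh y)).sub
        (Real.hasDerivAt_sinh y)).differentiableAt.differentiableWithinAt
    · intro y hy
      have hd : HasDerivAt (fun x : ℝ => x * Real.cosh x - Real.sinh x)
          (1 * Real.cosh y + y * Real.sinh y - Real.cosh y) y :=
        ((hasDerivAt_id y).mul (Real.hasDerivAt_cosh y)).sub (Real.hasDerivAt_sinh y)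
      rw [interior_Ici] at hy
      have hy' : (0:ℝ) < y := hy
      rw [hd.deriv]
      have := Real.sinh_pos_iff.2 hy'
      nlinarith
  have := h Set.self_mem_Ici hx hx
  simpa using this

theorem stmt_3 :
    StrictMonoOn (fun x : ℝ => Real.cosh x - (Real.cosh x)⁻¹ - x * Real.arctan (Real.sinh x))
      (Set.Ici (0 : ℝ)) := by
  have key : ∀ y : ℝ, 0 < y →
      0 < Real.sinh y + Real.sinh y / (Real.cosh y) ^ 2
        - (Real.arctan (Real.sinh y) + y / Real.cosh y) := by
    have hmono : StrictMonoOn (fun x : ℝ => Real.sinh x + Real.sinh x / (Real.cosh x) ^ 2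
        - (Real.arctan (Real.sinh x) + x / Real.cosh x)) (Set.Ici (0:ℝ)) := by
      apply StrictMonoOn.mono (s := Set.Ici (0:ℝ)) ?_ le_rfl
      apply strictMonoOn_of_deriv_pos (convex_Ici 0)
      · exact Continuous.continuousOn <|
          ((Real.continuous_sinh.add (Real.continuous_sinh.div (Real.continuous_cosh.pow 2)
            (fun x => pow_ne_zero 2 (Real.cosh_pos x).ne'))).sub
          ((Real.continuous_arctan.comp Real.continuous_sinh).add
            (continuous_id.div Real.continuous_cosh fun x => (Real.cosh_pos x).ne')))
      · intro y hy
        rw [interior_Ici] at hy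
        rw [(hd2 y).deriv]
        have hs := Real.sinh_pos_iff.2 hy
        have hc := Real.cosh_pos y
        have h1 := sinh_le_mul_cosh hy.le
        have : 0 < Real.sinh y ^ 3 - Real.sinh y + y * Real.cosh y := by
          nlinarith [pow_pos hs 3]
        positivity
    intro y hy
    have := hmono Set.self_mem_Ici (le_of_lt hy) hy
    simpa using this
  apply strictMonoOn_of_deriv_pos (convex_Ici 0)
  · exact Continuous.continuousOn <|
      ((Real.continuous_cosh.sub (Real.continuous_cosh.inv₀
        fun x => (Real.cosh_pos x).ne')).sub
      (continuous_id.mul (Real.continuous_arctan.comp Real.continuous_sinh)))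
  · intro y hy
    rw [interior_Ici] at hy
    rw [(hd1 y).deriv]
    exact key y hy
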